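/- Let w, s, v be simply typed λ-terms of the same type for s and v, with value complexities θ, τ, τ′ respectively, and let w{v/s} be the term obtained from w by replacing some occurrences of s by v (allowing variable capture). Then the value complexity of w{v/s} is either at most θ or equal to τ′; moreover, if τ′ ≤ τ then the value complexity of w{v/s} is at most θ. -/
import Mathlib


/-- Simple types. -/
inductive Ty : Type
  | base : Ty
  | arrow : Ty → Ty → Ty
  | prod : Ty → Ty → Ty
  | sum : Ty → Ty → Ty

/-- Complexity (size) of a type. -/
def Ty.size : Ty → ℕ
  | .base => 1
  | .arrow A B => A.size + B.size + 1
  | .prod A B => A.size + B.size + 1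
  | .sum A B => A.size + B.size + 1

/-- Simply typed λ-terms (de Bruijn variables; abstractions and injections are
annotated with the type of the whole term, so that value complexity is defined). -/
inductive Tm : Type
  | var : ℕ → Tm
  | lam : Ty → Tm → Tm
  | app : Tm → Tm → Tm
  | pair : Tm → Tm → Tm
  | proj : Bool → Tm → Tm
  | inl : Ty → Tm → Tm
  | inr : Ty → Tm → Tm
  | case : Tm → Tm → Tm → Tm

/-- One element of a stack: an applied argument, a projection, or a case elimination. -/
inductive Elim : Type
  | arg : Tm → Elim
  | proj : Bool → Elim
  | cas : Tm → Tm → Elim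

/-- A stack element is case-free if it is not a case elimination. -/
def Elim.CaseFree : Elim → Prop
  | .arg _ => True
  | .proj _ => True
  | .cas _ _ => False

/-- Apply one elimination to a term. -/
def plug : Tm → Elim → Tm
  | t, .arg u => .app t u
  | t, .proj b => .proj b t
  | t, .cas u v => .case t u v

/-- Apply the eliminations of a stack to a term, in order. -/
def plugStack (t : Tm) (σ : List Elim) : Tm := σ.foldl plug t

/-- Auxiliary function: `vcS t σ` is the value complexity of `t` applied to the
case-free stack `σ`. -/
def vcS : Tm → List Elim → ℕ
  | .app t w, σ => vcS t (.arg w :: σ)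
  | .proj b t, σ => vcS t (.proj b :: σ)
  | .case _ u v, σ => max (vcS u σ) (vcS v σ)
  | .lam T _, [] => T.size
  | .inl T _, [] => T.size
  | .inr T _, [] => T.size
  | .pair u v, [] => max (vcS u []) (vcS v [])
  | _, _ => 0

/-- Value complexity of a term: type complexity for abstractions and injections,
max of the components for pairs, `max (vc (uσ')) (vc (vσ'))` for a case
distinction `t[x.u, y.v]` under a case-free stack `σ'`, and `0` otherwise. -/
def vc (t : Tm) : ℕ := vcS t []


/-- Typing judgment `HasTy Γ t T` for de Bruijn terms. -/
inductive HasTy : List Ty → Tm → Ty → Prop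
  | var {Γ n A} : Γ[n]? = some A → HasTy Γ (.var n) A
  | lam {Γ A B t} : HasTy (A :: Γ) t B → HasTy Γ (.lam (Ty.arrow A B) t) (Ty.arrow A B)
  | app {Γ A B t u} : HasTy Γ t (Ty.arrow A B) → HasTy Γ u A → HasTy Γ (.app t u) B
  | pair {Γ A B t u} : HasTy Γ t A → HasTy Γ u B → HasTy Γ (.pair t u) (Ty.prod A B)
  | projL {Γ A B t} : HasTy Γ t (Ty.prod A B) → HasTy Γ (.proj false t) A
  | projR {Γ A B t} : HasTy Γ t (Ty.prod A B) → HasTy Γ (.proj true t) B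
  | inl {Γ A B t} : HasTy Γ t A → HasTy Γ (.inl (Ty.sum A B) t) (Ty.sum A B)
  | inr {Γ A B t} : HasTy Γ t B → HasTy Γ (.inr (Ty.sum A B) t) (Ty.sum A B)
  | case {Γ A B C t u v} : HasTy Γ t (Ty.sum A B) → HasTy (A :: Γ) u C →
      HasTy (B :: Γ) v C → HasTy Γ (.case t u v) C

/-- Simple replacement: `Repl s v w w'` holds when `w'` is obtained from `w` by
replacing some occurrences of `s` by `v` (possibly causing capture of variables). -/
inductive Repl (s v : Tm) : Tm → Tm → Prop
  | here : Repl s v s v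
  | var (n) : Repl s v (.var n) (.var n)
  | lam {t t'} (T) : Repl s v t t' → Repl s v (.lam T t) (.lam T t')
  | app {t t' u u'} : Repl s v t t' → Repl s v u u' → Repl s v (.app t u) (.app t' u')
  | pair {t t' u u'} : Repl s v t t' → Repl s v u u' → Repl s v (.pair t u) (.pair t' u')
  | proj {t t'} (b) : Repl s v t t' → Repl s v (.proj b t) (.proj b t')
  | inl {t t'} (T) : Repl s v t t' → Repl s v (.inl T t) (.inl T t')
  | inr {t t'} (T) : Repl s v t t' → Repl s v (.inr T t) (.inr T t')
  | case {t t' u u' w w'} : Repl s v t t' → Repl s v u u' → Repl s v w w' →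
      Repl s v (.case t u w) (.case t' u' w')

lemma vcS_cons (t : Tm) : ∀ e σ, vcS t (e :: σ) = 0 := by
  induction t with
  | var n => intro e σ; rfl
  | lam T b ih => intro e σ; rfl
  | app t u iht ihu => intro e σ; exact iht (.arg u) (e :: σ)
  | pair t u iht ihu => intro e σ; rfl
  | proj b t ih => intro e σ; exact ih (.proj b) (e :: σ)
  | inl T t ih => intro e σ; rfl
  | inr T t ih => intro e σ; rfl
  | case t u w iht ihu ihw =>
      intro e σ
      show max (vcS u (e :: σ)) (vcS w (e :: σ)) = 0
      rw [ihu e σ, ihw e σ]; rfl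

lemma vc_app (t u : Tm) : vc (.app t u) = 0 := vcS_cons t (.arg u) []
lemma vc_proj (b : Bool) (t : Tm) : vc (.proj b t) = 0 := vcS_cons t (.proj b) []
lemma vc_case (t u w : Tm) : vc (.case t u w) = max (vc u) (vc w) := rfl
lemma vc_pair (t u : Tm) : vc (.pair t u) = max (vc t) (vc u) := rfl
lemma vc_lam (T : Ty) (t : Tm) : vc (.lam T t) = T.size := rfl
lemma vc_inl (T : Ty) (t : Tm) : vc (.inl T t) = T.size := rfl
lemma vc_inr (T : Ty) (t : Tm) : vc (.inr T t) = T.size := rfl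

/-- "The Change of Value": let `w, s, v` be simply typed λ-terms, with `s` and `v`
of the same type, and value complexities `θ = vc w`, `τ = vc s`, `τ' = vc v`.
Then the value complexity of `w{v/s}` is either at most `θ` or equal to `τ'`;
moreover, if `τ' ≤ τ` then the value complexity of `w{v/s}` is at most `θ`. -/
theorem change_of_value {Γ : List Ty} {T : Ty} {w s v w' : Tm}
    (hs : HasTy Γ s T) (hv : HasTy Γ v T) (h : Repl s v w w') :
    (vc w' ≤ vc w ∨ vc w' = vc v) ∧ (vc v ≤ vc s → vc w' ≤ vc w)  := by
  induction h with
  | here => exact ⟨Or.inr rfl, fun h => h⟩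
  | var n => exact ⟨Or.inl le_rfl, fun _ => le_rfl⟩
  | lam T _ _ => rw [vc_lam, vc_lam]; exact ⟨Or.inl le_rfl, fun _ => le_rfl⟩
  | app _ _ _ _ => rw [vc_app, vc_app]; exact ⟨Or.inl le_rfl, fun _ => le_rfl⟩
  | pair _ _ ih1 ih2 =>
      rw [vc_pair, vc_pair]
      obtain ⟨h1, h1'⟩ := ih1; obtain ⟨h2, h2'⟩ := ih2
      constructor
      · rcases h1 with h1 | h1 <;> rcases h2 with h2 | h2 <;> omega
      · intro hle; have := h1' hle; have := h2' hle; omega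
  | proj b _ _ => rw [vc_proj, vc_proj]; exact ⟨Or.inl le_rfl, fun _ => le_rfl⟩
  | inl T _ _ => rw [vc_inl, vc_inl]; exact ⟨Or.inl le_rfl, fun _ => le_rfl⟩
  | inr T _ _ => rw [vc_inr, vc_inr]; exact ⟨Or.inl le_rfl, fun _ => le_rfl⟩
  | case _ _ _ _ ih1 ih2 =>
      rw [vc_case, vc_case]
      obtain ⟨h1, h1'⟩ := ih1; obtain ⟨h2, h2'⟩ := ih2
      constructor
      · rcases h1 with h1 | h1 <;> rcases h2 with h2 | h2 <;> omega
      · intro hle; have := h1' hle; have := h2' hle; omega
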